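/- Let α, β, δ ∈ (0,1) with α, δ < β²/100, let (G_samp = (V2,V1,E), W) be an (α,δ)-sampler, and let G be its two-step walk graph on V2. Then for every A ⊆ V2 with μ_G(A) ≥ β there exists B ⊆ A with μ_G(B) ≥ β/4 such that the induced graph G_B satisfies λ(G_B) ≤ 99/100. -/

import Mathlib

open Finset

set_option maxHeartbeats 2000000

private lemma aux_wcs2 {ι : Type*} (s : Finset ι) (w a b : ι → ℝ) (hw : ∀ i ∈ s, 0 ≤ w i) :
    (∑ i ∈ s, w i * (a i * b i))^2 ≤ (∑ i ∈ s, w i * a i^2) * (∑ i ∈ s, w i * b i^2) := by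
  have h := Finset.sum_mul_sq_le_sq_mul_sq s (fun i => Real.sqrt (w i) * a i)
    (fun i => Real.sqrt (w i) * b i)
  have e1 : ∑ i ∈ s, (Real.sqrt (w i) * a i) * (Real.sqrt (w i) * b i)
      = ∑ i ∈ s, w i * (a i * b i) := by
    refine Finset.sum_congr rfl fun i hi => ?_
    have hs : Real.sqrt (w i) * Real.sqrt (w i) = w i := Real.mul_self_sqrt (hw i hi)
    calc (Real.sqrt (w i) * a i) * (Real.sqrt (w i) * b i)
        = (Real.sqrt (w i) * Real.sqrt (w i)) * (a i * b i) := by ring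
      _ = w i * (a i * b i) := by rw [hs]
  have e2 : ∑ i ∈ s, (Real.sqrt (w i) * a i)^2 = ∑ i ∈ s, w i * a i^2 := by
    refine Finset.sum_congr rfl fun i hi => ?_
    have hs : Real.sqrt (w i) * Real.sqrt (w i) = w i := Real.mul_self_sqrt (hw i hi)
    calc (Real.sqrt (w i) * a i)^2 = (Real.sqrt (w i) * Real.sqrt (w i)) * a i^2 := by ring
      _ = w i * a i^2 := by rw [hs]
  have e3 : ∑ i ∈ s, (Real.sqrt (w i) * b i)^2 = ∑ i ∈ s, w i * b i^2 := by
    refine Finset.sum_congr rfl fun i hi => ?_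
    have hs : Real.sqrt (w i) * Real.sqrt (w i) = w i := Real.mul_self_sqrt (hw i hi)
    calc (Real.sqrt (w i) * b i)^2 = (Real.sqrt (w i) * Real.sqrt (w i)) * b i^2 := by ring
      _ = w i * b i^2 := by rw [hs]
  rw [e1, e2, e3] at h
  exact h

private lemma aux_wcs {ι : Type*} (s : Finset ι) (w a : ι → ℝ) (hw : ∀ i ∈ s, 0 ≤ w i) :
    (∑ i ∈ s, w i * a i)^2 ≤ (∑ i ∈ s, w i) * (∑ i ∈ s, w i * a i^2) := by
  have h := aux_wcs2 s w (fun _ => 1) a hw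
  simp only [one_pow, mul_one, one_mul] at h
  exact h

private lemma aux_ptsq (a : ℝ) : (max a 0)^2 + (max (-a) 0)^2 = a^2 := by
  rcases le_total a 0 with h | h
  · rw [max_eq_right h, max_eq_left (by linarith)]; ring
  · rw [max_eq_left h, max_eq_right (by linarith)]; ring

private lemma aux_ptdiff (a b : ℝ) :
    (max a 0 - max b 0)^2 + (max (-a) 0 - max (-b) 0)^2 ≤ (a - b)^2 := by
  rcases le_total a 0 with ha | ha <;> rcases le_total b 0 with hb | hb
  · rw [max_eq_right ha, max_eq_right hb, max_eq_left (by linarith), max_eq_left (by linarith)]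
    nlinarith
  · rw [max_eq_right ha, max_eq_left hb, max_eq_left (by linarith), max_eq_right (by linarith)]
    nlinarith
  · rw [max_eq_left ha, max_eq_right hb, max_eq_right (by linarith), max_eq_left (by linarith)]
    nlinarith
  · rw [max_eq_left ha, max_eq_left hb, max_eq_right (by linarith), max_eq_right (by linarith)]
    nlinarith

private lemma aux_telescope (T : Finset ℝ) (hT : ∀ s ∈ T, 0 < s) :
    ∀ (n : ℕ) (y : ℝ), (T.filter (fun s => s ≤ y)).card ≤ n → y ∈ insert (0:ℝ) T →
      ∑ s ∈ T.filter (fun s => s ≤ y),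
        (s - (WithBot.unbotD 0 ((insert (0:ℝ) T).filter (fun x => x < s)).max)) = y := by
  intro n
  induction n with
  | zero =>
    intro y hcard hy
    rcases Finset.mem_insert.mp hy with h0 | hyT
    · subst h0
      have : T.filter (fun s => s ≤ (0:ℝ)) = ∅ := by
        refine Finset.filter_eq_empty_iff.mpr fun s hs => ?_
        exact not_le.mpr (hT s hs)
      rw [this]; simp
    · exfalso
      have : y ∈ T.filter (fun s => s ≤ y) := Finset.mem_filter.mpr ⟨hyT, le_refl y⟩
      have := Finset.card_pos.mpr ⟨y, this⟩
      omega
  | succ n ih =>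
    intro y hcard hy
    rcases Finset.mem_insert.mp hy with h0 | hyT
    · subst h0
      have : T.filter (fun s => s ≤ (0:ℝ)) = ∅ := by
        refine Finset.filter_eq_empty_iff.mpr fun s hs => ?_
        exact not_le.mpr (hT s hs)
      rw [this]; simp
    · have hy0 : 0 < y := hT y hyT
      set F : Finset ℝ := (insert (0:ℝ) T).filter (fun x => x < y) with hF
      have hFne : F.Nonempty := ⟨0, Finset.mem_filter.mpr ⟨Finset.mem_insert_self _ _, hy0⟩⟩
      have hmaxeq : WithBot.unbotD 0 F.max = F.max' hFne := by rw [← Finset.coe_max' hFne]; rfl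
      set p : ℝ := F.max' hFne with hp
      have hpF : p ∈ F := Finset.max'_mem F hFne
      have hpT : p ∈ insert (0:ℝ) T := (Finset.mem_filter.mp hpF).1
      have hpy : p < y := (Finset.mem_filter.mp hpF).2
      have hmax : ∀ x ∈ F, x ≤ p := fun x hx => Finset.le_max' F x hx
      have hsplit : T.filter (fun s => s ≤ y) = insert y (T.filter (fun s => s ≤ p)) := by
        ext s
        simp only [Finset.mem_filter, Finset.mem_insert]
        constructor
        · rintro ⟨hsT, hsy⟩
          rcases eq_or_lt_of_le hsy with h | h
          · exact Or.inl h
          · exact Or.inr ⟨hsT, hmax s (Finset.mem_filter.mpr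
              ⟨Finset.mem_insert_of_mem hsT, h⟩)⟩
        · rintro (h | ⟨hsT, hsp⟩)
          · exact ⟨h ▸ hyT, le_of_eq h⟩
          · exact ⟨hsT, le_of_lt (lt_of_le_of_lt hsp hpy)⟩
      have hynotin : y ∉ T.filter (fun s => s ≤ p) := by
        intro hmem
        exact absurd ((Finset.mem_filter.mp hmem).2) (not_le.mpr hpy)
      have hcard' : (T.filter (fun s => s ≤ p)).card ≤ n := by
        have h1 : (T.filter (fun s => s ≤ y)).card
            = (T.filter (fun s => s ≤ p)).card + 1 := by
          rw [hsplit, Finset.card_insert_of_notMem hynotin]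
        omega
      rw [hsplit, Finset.sum_insert hynotin, ih p hcard' hpT, ← hF, hmaxeq]
      ring

private lemma aux_telescope' (T : Finset ℝ) (hT : ∀ s ∈ T, 0 < s) (y : ℝ)
    (hy : y ∈ insert (0:ℝ) T) :
    ∑ s ∈ T.filter (fun s => s ≤ y),
      (s - (WithBot.unbotD 0 ((insert (0:ℝ) T).filter (fun x => x < s)).max)) = y :=
  aux_telescope T hT _ y le_rfl hy

private lemma aux_tele_int (T : Finset ℝ) (hT : ∀ s ∈ T, 0 < s) (x y : ℝ)
    (hx : x ∈ insert (0:ℝ) T) (hy : y ∈ insert (0:ℝ) T) :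
    ∑ s ∈ T.filter (fun s => y < s ∧ s ≤ x),
      (s - (WithBot.unbotD 0 ((insert (0:ℝ) T).filter (fun t => t < s)).max)) = max (x - y) 0 := by
  rcases le_or_gt x y with h | h
  · have he : T.filter (fun s => y < s ∧ s ≤ x) = ∅ := by
      refine Finset.filter_eq_empty_iff.mpr fun s _ => ?_
      rintro ⟨h1, h2⟩
      exact absurd (lt_of_lt_of_le h1 h2) (not_lt.mpr h)
    rw [he, max_eq_right (by linarith)]
    simp
  · have hsub : T.filter (fun s => s ≤ y) ⊆ T.filter (fun s => s ≤ x) := by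
      intro s hs
      rw [Finset.mem_filter] at hs ⊢
      exact ⟨hs.1, le_trans hs.2 (le_of_lt h)⟩
    have he : T.filter (fun s => y < s ∧ s ≤ x)
        = T.filter (fun s => s ≤ x) \ T.filter (fun s => s ≤ y) := by
      ext s
      simp only [Finset.mem_filter, Finset.mem_sdiff, not_and, not_le]
      constructor
      · rintro ⟨hsT, h1, h2⟩; exact ⟨⟨hsT, h2⟩, fun _ => h1⟩
      · rintro ⟨⟨hsT, h2⟩, h1⟩; exact ⟨hsT, h1 hsT, h2⟩
    rw [he, Finset.sum_sdiff_eq_sub hsub, aux_telescope' T hT x hx,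
      aux_telescope' T hT y hy, max_eq_left (by linarith)]

private lemma aux_median {V : Type*} [DecidableEq V] (B : Finset V) (μ f : V → ℝ)
    (hμ : ∀ v, 0 ≤ μ v) (hB : B.Nonempty) :
    ∃ cc : ℝ, (∑ v ∈ B.filter (fun v => cc < f v), μ v) ≤ (∑ v ∈ B, μ v)/2 ∧
           (∑ v ∈ B.filter (fun v => f v < cc), μ v) ≤ (∑ v ∈ B, μ v)/2 := by
  have hμB : 0 ≤ ∑ v ∈ B, μ v := Finset.sum_nonneg fun v _ => hμ v
  set I : Finset ℝ := B.image f with hI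
  have hIne : I.Nonempty := hB.image f
  set D : Finset ℝ := I.filter
    (fun t => (∑ v ∈ B.filter (fun v => t < f v), μ v) ≤ (∑ v ∈ B, μ v)/2) with hD
  have hDne : D.Nonempty := by
    refine ⟨I.max' hIne, Finset.mem_filter.mpr ⟨Finset.max'_mem _ _, ?_⟩⟩
    have : B.filter (fun v => I.max' hIne < f v) = ∅ := by
      refine Finset.filter_eq_empty_iff.mpr fun v hv => ?_
      exact not_lt.mpr (Finset.le_max' I (f v) (Finset.mem_image_of_mem f hv))
    rw [this]
    simpa using by linarith
  set cc : ℝ := D.min' hDne with hcc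
  have hccD : cc ∈ D := Finset.min'_mem _ _
  have hfirst : (∑ v ∈ B.filter (fun v => cc < f v), μ v) ≤ (∑ v ∈ B, μ v)/2 :=
    (Finset.mem_filter.mp hccD).2
  refine ⟨cc, hfirst, ?_⟩
  by_cases hemp : B.filter (fun v => f v < cc) = ∅
  · rw [hemp]; simpa using by linarith
  · obtain ⟨v1, hv1⟩ := Finset.nonempty_iff_ne_empty.mpr hemp
    rw [Finset.mem_filter] at hv1
    set J : Finset ℝ := I.filter (fun t => t < cc) with hJ
    have hJne : J.Nonempty :=
      ⟨f v1, Finset.mem_filter.mpr ⟨Finset.mem_image_of_mem f hv1.1, hv1.2⟩⟩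
    set t1 : ℝ := J.max' hJne with ht1
    have ht1J : t1 ∈ J := Finset.max'_mem _ _
    have ht1I : t1 ∈ I := (Finset.mem_filter.mp ht1J).1
    have ht1c : t1 < cc := (Finset.mem_filter.mp ht1J).2
    have ht1notD : t1 ∉ D := by
      intro hmem
      exact absurd (Finset.min'_le D t1 hmem) (not_le.mpr ht1c)
    have ht1big : (∑ v ∈ B, μ v)/2 < ∑ v ∈ B.filter (fun v => t1 < f v), μ v := by
      by_contra hle
      exact ht1notD (Finset.mem_filter.mpr ⟨ht1I, not_lt.mp hle⟩)
    have hsplit : (∑ v ∈ B.filter (fun v => t1 < f v), μ v)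
        + (∑ v ∈ B.filter (fun v => ¬ t1 < f v), μ v) = ∑ v ∈ B, μ v :=
      Finset.sum_filter_add_sum_filter_not B _ μ
    have hsub : B.filter (fun v => f v < cc) ⊆ B.filter (fun v => ¬ t1 < f v) := by
      intro v hv
      rw [Finset.mem_filter] at hv ⊢
      refine ⟨hv.1, not_lt.mpr ?_⟩
      exact Finset.le_max' J (f v)
        (Finset.mem_filter.mpr ⟨Finset.mem_image_of_mem f hv.1, hv.2⟩)
    have hmono : (∑ v ∈ B.filter (fun v => f v < cc), μ v)
        ≤ ∑ v ∈ B.filter (fun v => ¬ t1 < f v), μ v :=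
      Finset.sum_le_sum_of_subset_of_nonneg hsub (fun v _ _ => hμ v)
    linarith

private lemma aux_maxabs (a : ℝ) : max a 0 + max (-a) 0 = |a| := by
  rcases le_total a 0 with h | h
  · rw [max_eq_right h, max_eq_left (by linarith), abs_of_nonpos h]; ring
  · rw [max_eq_left h, max_eq_right (by linarith), abs_of_nonneg h]; ring

section sweep
variable {V : Type*} [DecidableEq V] (B : Finset V) (W : V → V → ℝ) (μ : V → ℝ)

set_option maxHeartbeats 2000000 in
private lemma aux_sweep
    (hW0 : ∀ u v, 0 ≤ W u v) (hWs : ∀ u v, W u v = W v u) (hμ0 : ∀ v, 0 ≤ μ v)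
    (hQ0 : ∀ x : V → ℝ, 0 ≤ ∑ v ∈ B, ∑ u ∈ B, W v u * (x v * x u))
    (hCS : ∀ x y : V → ℝ, (∑ v ∈ B, ∑ u ∈ B, W v u * (x v * y u))^2 ≤
        (∑ v ∈ B, ∑ u ∈ B, W v u * (x v * x u)) * (∑ v ∈ B, ∑ u ∈ B, W v u * (y v * y u)))
    (hQc : ∀ x : V → ℝ, (∑ v ∈ B, ∑ u ∈ B, W v u * (x v * x u))
        ≤ ∑ v ∈ B, (∑ u ∈ B, W v u) * x v ^ 2)
    (f : V → ℝ)
    (hmean : ∑ v ∈ B, (∑ u ∈ B, W v u) * f v = 0)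
    (hviol : ¬ (∑ v ∈ B, (∑ u ∈ B, W v u) * ((∑ u ∈ B, W v u * f u) / (∑ u ∈ B, W v u)) ^ 2
          ≤ (99 / 100 : ℝ) ^ 2 * ∑ v ∈ B, (∑ u ∈ B, W v u) * (f v) ^ 2)) :
    ∃ C ⊆ B, C.Nonempty ∧ (∑ v ∈ C, μ v) ≤ (∑ v ∈ B, μ v)/2 ∧
      (∑ u ∈ C, ∑ v ∈ B \ C, W u v) ≤ (1/5) * ∑ u ∈ C, ∑ v ∈ B, W u v := by
  classical
  rw [not_le] at hviol
  set d : V → ℝ := fun v => ∑ u ∈ B, W v u with hd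
  set Wf : V → ℝ := fun v => ∑ u ∈ B, W v u * f u with hWf
  have hd0 : ∀ v, 0 ≤ d v := fun v => Finset.sum_nonneg fun u _ => hW0 v u
  have hdz : ∀ v, d v = 0 → ∀ u ∈ B, W v u = 0 := by
    intro v hv
    exact (Finset.sum_eq_zero_iff_of_nonneg (fun u _ => hW0 v u)).mp hv
  have hWfz : ∀ v, d v = 0 → Wf v = 0 := by
    intro v hv
    exact Finset.sum_eq_zero fun u hu => by rw [hdz v hv u hu, zero_mul]
  set N1 : ℝ := ∑ v ∈ B, d v * f v ^ 2 with hN1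
  set N2 : ℝ := ∑ v ∈ B, Wf v ^ 2 / d v with hN2
  have key0 : ∑ v ∈ B, d v * (Wf v / d v) ^ 2 = N2 := by
    refine Finset.sum_congr rfl fun v _ => ?_
    by_cases hv : d v = 0
    · rw [hv, zero_mul, div_zero]
    · field_simp
  have hviol' : (99/100:ℝ)^2 * N1 < N2 := by
    rw [← key0]
    exact hviol
  have hN1nn : 0 ≤ N1 := Finset.sum_nonneg fun v _ =>
    mul_nonneg (hd0 v) (sq_nonneg _)
  have hN2pos : 0 < N2 := lt_of_le_of_lt (by positivity) hviol'
  set g : V → ℝ := fun v => Wf v / d v with hg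
  have hdg2 : ∀ v ∈ B, d v * g v ^ 2 = Wf v ^ 2 / d v := by
    intro v _
    by_cases hv : d v = 0
    · simp [hg, hv]
    · simp only [hg]
      field_simp
  have hgWf : ∀ v ∈ B, g v * Wf v = Wf v ^ 2 / d v := by
    intro v _
    by_cases hv : d v = 0
    · simp [hg, hv, hWfz v hv]
    · simp only [hg]
      field_simp
  have hQgf : ∑ v ∈ B, ∑ u ∈ B, W v u * (g v * f u) = N2 := by
    have e1 : ∀ v ∈ B, ∑ u ∈ B, W v u * (g v * f u) = g v * Wf v := by
      intro v _
      rw [hWf, Finset.mul_sum]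
      exact Finset.sum_congr rfl fun u _ => by ring
    rw [Finset.sum_congr rfl e1, Finset.sum_congr rfl hgWf]
  have hQgg : ∑ v ∈ B, ∑ u ∈ B, W v u * (g v * g u) ≤ N2 := by
    have e : ∑ v ∈ B, (∑ u ∈ B, W v u) * g v ^ 2 = N2 := by
      rw [hN2]
      exact Finset.sum_congr rfl hdg2
    exact le_trans (hQc g) (le_of_eq e)
  have hQffN2 : N2 ≤ ∑ v ∈ B, ∑ u ∈ B, W v u * (f v * f u) := by
    have hcs := hCS g f
    rw [hQgf] at hcs
    have h2 : (∑ v ∈ B, ∑ u ∈ B, W v u * (g v * g u))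
        * (∑ v ∈ B, ∑ u ∈ B, W v u * (f v * f u))
        ≤ N2 * (∑ v ∈ B, ∑ u ∈ B, W v u * (f v * f u)) :=
      mul_le_mul_of_nonneg_right hQgg (hQ0 f)
    have h3 : N2 * N2 ≤ N2 * (∑ v ∈ B, ∑ u ∈ B, W v u * (f v * f u)) := by
      calc N2 * N2 = N2 ^ 2 := by ring
        _ ≤ _ := le_trans hcs h2
    exact le_of_mul_le_mul_left h3 hN2pos
  set Qff : ℝ := ∑ v ∈ B, ∑ u ∈ B, W v u * (f v * f u) with hQff
  have hQffN1 : Qff ≤ N1 := le_of_le_of_eq (hQc f) rfl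
  have hQffbig : (9801/10000:ℝ) * N1 < Qff := by
    have : (99/100:ℝ)^2 = 9801/10000 := by norm_num
    calc (9801/10000:ℝ) * N1 = (99/100:ℝ)^2 * N1 := by rw [this]
      _ < N2 := hviol'
      _ ≤ Qff := hQffN2
  have hN1pos : 0 < N1 := by nlinarith
  have hBne : B.Nonempty := by
    rcases Finset.exists_ne_zero_of_sum_ne_zero (by rw [← hN1]; exact ne_of_gt hN1pos)
      with ⟨v, hv, _⟩
    exact ⟨v, hv⟩
  -- Dirichlet form identity
  have hcol : ∀ u ∈ B, ∑ v ∈ B, W v u = d u := by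
    intro u _
    rw [hd]
    exact Finset.sum_congr rfl fun v _ => hWs v u
  have hdira : ∀ x : V → ℝ, ∑ v ∈ B, ∑ u ∈ B, W v u * (x v - x u)^2
      = 2 * (∑ v ∈ B, d v * x v ^ 2) - 2 * ∑ v ∈ B, ∑ u ∈ B, W v u * (x v * x u) := by
    intro x
    have e1 : ∀ v ∈ B, ∑ u ∈ B, W v u * (x v - x u)^2
        = d v * x v ^2 - 2 * (∑ u ∈ B, W v u * (x v * x u)) + ∑ u ∈ B, W v u * x u ^ 2 := by
      intro v _
      have e2 : ∀ u ∈ B, W v u * (x v - x u)^2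
          = W v u * x v ^2 - 2 * (W v u * (x v * x u)) + W v u * x u ^ 2 :=
        fun u _ => by ring
      rw [Finset.sum_congr rfl e2, Finset.sum_add_distrib, Finset.sum_sub_distrib,
        ← Finset.mul_sum, ← Finset.sum_mul]
    rw [Finset.sum_congr rfl e1, Finset.sum_add_distrib, Finset.sum_sub_distrib,
      ← Finset.mul_sum]
    have e3 : ∑ v ∈ B, ∑ u ∈ B, W v u * x u ^ 2 = ∑ v ∈ B, d v * x v ^ 2 := by
      rw [Finset.sum_comm]
      refine Finset.sum_congr rfl fun u hu => ?_
      rw [← Finset.sum_mul, hcol u hu]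
    rw [e3]
    ring
  have hmaxpos : ∀ a : ℝ, 0 < max a 0 ↔ 0 < a := fun a => by simp [lt_max_iff]
  -- The inner sweep argument
  have SWEEP : ∀ h : V → ℝ, (∀ v, 0 ≤ h v) →
      (∑ v ∈ B, ∑ u ∈ B, W v u * (h v - h u)^2) < (1/25) * (∑ v ∈ B, d v * h v^2) →
      ((∑ v ∈ B.filter (fun v => 0 < h v), μ v) ≤ (∑ v ∈ B, μ v)/2) →
      ∃ C ⊆ B, C.Nonempty ∧ (∑ v ∈ C, μ v) ≤ (∑ v ∈ B, μ v)/2 ∧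
        (∑ u ∈ C, ∑ v ∈ B \ C, W u v) ≤ (1/5) * ∑ u ∈ C, ∑ v ∈ B, W u v := by
    intro h h0 hdirich hsupp
    set Nh : ℝ := ∑ v ∈ B, d v * h v^2 with hNh
    have hS2nn : 0 ≤ ∑ v ∈ B, ∑ u ∈ B, W v u * (h v - h u)^2 :=
      Finset.sum_nonneg fun v _ => Finset.sum_nonneg fun u _ =>
        mul_nonneg (hW0 v u) (sq_nonneg _)
    have hNhpos : 0 < Nh := by nlinarith
    set T : Finset ℝ := (B.filter fun v => 0 < h v).image (fun v => h v^2) with hT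
    have hTpos : ∀ s ∈ T, 0 < s := by
      intro s hs
      obtain ⟨v, hv, rfl⟩ := Finset.mem_image.mp hs
      exact pow_pos (Finset.mem_filter.mp hv).2 2
    have hTne : T.Nonempty := by
      have hne : (∑ v ∈ B, d v * h v^2) ≠ 0 := by rw [← hNh]; exact ne_of_gt hNhpos
      obtain ⟨v, hv, hvne⟩ := Finset.exists_ne_zero_of_sum_ne_zero hne
      have hhv : h v ≠ 0 := by
        intro h0'
        rw [h0'] at hvne
        simp at hvne
      exact ⟨h v ^2, Finset.mem_image_of_mem _
        (Finset.mem_filter.mpr ⟨hv, lt_of_le_of_ne (h0 v) (Ne.symm hhv)⟩)⟩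
    have hymem : ∀ v ∈ B, h v^2 ∈ insert (0:ℝ) T := by
      intro v hv
      rcases eq_or_lt_of_le (h0 v) with he | hlt
      · rw [← he]
        norm_num
      · exact Finset.mem_insert_of_mem (Finset.mem_image_of_mem _
          (Finset.mem_filter.mpr ⟨hv, hlt⟩))
    set gp : ℝ → ℝ :=
      fun s => s - (WithBot.unbotD 0 ((insert (0:ℝ) T).filter (fun t => t < s)).max) with hgp
    have hgappos : ∀ s ∈ T, 0 < gp s := by
      intro s hs
      have hs0 := hTpos s hs
      have hFne : (((insert (0:ℝ) T).filter (fun t => t < s))).Nonempty :=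
        ⟨0, Finset.mem_filter.mpr ⟨Finset.mem_insert_self _ _, hs0⟩⟩
      have heq : WithBot.unbotD 0 (((insert (0:ℝ) T).filter (fun t => t < s))).max
          = (((insert (0:ℝ) T).filter (fun t => t < s))).max' hFne := by
        rw [← Finset.coe_max' hFne]; rfl
      have hlt : (((insert (0:ℝ) T).filter (fun t => t < s))).max' hFne < s :=
        (Finset.mem_filter.mp (Finset.max'_mem _ hFne)).2
      rw [hgp]
      simp only
      rw [heq]
      linarith
    have I1 : ∑ s ∈ T, gp s * (∑ u ∈ B.filter (fun v => s ≤ h v^2), ∑ v ∈ B, W u v) = Nh := by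
      have e1 : ∀ s ∈ T, gp s * (∑ u ∈ B.filter (fun v => s ≤ h v^2), ∑ v ∈ B, W u v)
          = ∑ u ∈ B, (if s ≤ h u^2 then gp s * d u else 0) := by
        intro s _
        rw [Finset.sum_filter, Finset.mul_sum]
        exact Finset.sum_congr rfl fun u _ => by rw [mul_ite, mul_zero]
      rw [Finset.sum_congr rfl e1, Finset.sum_comm]
      have e2 : ∀ v ∈ B, ∑ s ∈ T, (if s ≤ h v^2 then gp s * d v else 0) = d v * h v^2 := by
        intro v hv
        rw [← Finset.sum_filter, ← Finset.sum_mul]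
        have htel := aux_telescope' T hTpos (h v^2) (hymem v hv)
        rw [hgp]
        simp only
        rw [htel, mul_comm]
      rw [Finset.sum_congr rfl e2, hNh]
    have I2 : ∑ s ∈ T, gp s * (∑ u ∈ B.filter (fun v => s ≤ h v^2),
          ∑ v ∈ B \ B.filter (fun v => s ≤ h v^2), W u v)
        = ∑ u ∈ B, ∑ v ∈ B, W u v * max (h u^2 - h v^2) 0 := by
      have hBdiff : ∀ s : ℝ, B \ B.filter (fun v => s ≤ h v^2)
          = B.filter (fun v => ¬ s ≤ h v^2) := fun s => (Finset.filter_not _ _).symm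
      have e1 : ∀ s ∈ T, gp s * (∑ u ∈ B.filter (fun v => s ≤ h v^2),
            ∑ v ∈ B \ B.filter (fun v => s ≤ h v^2), W u v)
          = ∑ u ∈ B, ∑ v ∈ B, (if h v^2 < s ∧ s ≤ h u^2 then gp s * W u v else 0) := by
        intro s _
        rw [hBdiff s, Finset.sum_filter, Finset.mul_sum]
        refine Finset.sum_congr rfl fun u _ => ?_
        by_cases hu : s ≤ h u^2
        · rw [if_pos hu, Finset.sum_filter, Finset.mul_sum]
          refine Finset.sum_congr rfl fun v _ => ?_
          by_cases hv : s ≤ h v^2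
          · rw [if_neg (not_not_intro hv), mul_zero,
              if_neg (fun hc => absurd hc.1 (not_lt.mpr hv))]
          · rw [if_pos hv, if_pos ⟨not_le.mp hv, hu⟩]
        · rw [if_neg hu, mul_zero]
          exact (Finset.sum_eq_zero fun v _ => by
            rw [if_neg (fun hc => absurd hc.2 hu)]).symm
      rw [Finset.sum_congr rfl e1, Finset.sum_comm]
      have e2 : ∀ u ∈ B, ∑ s ∈ T, ∑ v ∈ B, (if h v^2 < s ∧ s ≤ h u^2 then gp s * W u v else 0)
          = ∑ v ∈ B, ∑ s ∈ T, (if h v^2 < s ∧ s ≤ h u^2 then gp s * W u v else 0) :=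
        fun u _ => Finset.sum_comm
      rw [Finset.sum_congr rfl e2]
      refine Finset.sum_congr rfl fun u hu => Finset.sum_congr rfl fun v hv => ?_
      rw [← Finset.sum_filter, ← Finset.sum_mul]
      have htel := aux_tele_int T hTpos (h u^2) (h v^2) (hymem u hu) (hymem v hv)
      rw [hgp]
      simp only
      rw [htel, mul_comm]
    set Pos : ℝ := ∑ u ∈ B, ∑ v ∈ B, W u v * max (h u^2 - h v^2) 0 with hPos
    have hsym : Pos = ∑ u ∈ B, ∑ v ∈ B, W u v * max (h v^2 - h u^2) 0 := by
      rw [hPos, Finset.sum_comm]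
      exact Finset.sum_congr rfl fun u _ => Finset.sum_congr rfl fun v _ => by rw [hWs v u]
    have habs : 2 * Pos = ∑ u ∈ B, ∑ v ∈ B, W u v * |h u^2 - h v^2| := by
      have e1 : Pos + Pos = ∑ u ∈ B, ∑ v ∈ B,
          (W u v * max (h u^2 - h v^2) 0 + W u v * max (h v^2 - h u^2) 0) := by
        nth_rewrite 2 [hsym]
        rw [hPos, ← Finset.sum_add_distrib]
        exact Finset.sum_congr rfl fun u _ => (Finset.sum_add_distrib).symm
      have e2 : ∀ u ∈ B, ∀ v ∈ B,
          W u v * max (h u^2 - h v^2) 0 + W u v * max (h v^2 - h u^2) 0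
          = W u v * |h u^2 - h v^2| := by
        intro u _ v _
        rw [← mul_add]
        congr 1
        rw [show h v^2 - h u^2 = -(h u^2 - h v^2) by ring]
        exact aux_maxabs _
      calc 2 * Pos = Pos + Pos := by ring
        _ = _ := by
            rw [e1]
            exact Finset.sum_congr rfl fun u hu => Finset.sum_congr rfl fun v hv =>
              e2 u hu v hv
    have hcs2 : (∑ u ∈ B, ∑ v ∈ B, W u v * |h u^2 - h v^2|)^2
        ≤ (∑ u ∈ B, ∑ v ∈ B, W u v * (h u - h v)^2)
          * (∑ u ∈ B, ∑ v ∈ B, W u v * (h u + h v)^2) := by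
      have hw := aux_wcs2 (B ×ˢ B) (fun p => W p.1 p.2)
        (fun p => |h p.1 - h p.2|) (fun p => h p.1 + h p.2) (fun p _ => hW0 _ _)
      simp only [Finset.sum_product] at hw
      have e1 : ∀ u ∈ B, ∀ v ∈ B, W u v * (|h u - h v| * (h u + h v))
          = W u v * |h u^2 - h v^2| := by
        intro u _ v _
        congr 1
        rw [← abs_of_nonneg (by have := h0 u; have := h0 v; linarith : (0:ℝ) ≤ h u + h v),
          ← abs_mul]
        congr 1
        ring
      have e2 : ∀ u ∈ B, ∀ v ∈ B, W u v * (|h u - h v|)^2 = W u v * (h u - h v)^2 := by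
        intro u _ v _
        rw [sq_abs]
      calc (∑ u ∈ B, ∑ v ∈ B, W u v * |h u^2 - h v^2|)^2
          = (∑ u ∈ B, ∑ v ∈ B, W u v * (|h u - h v| * (h u + h v)))^2 := by
            congr 1
            exact Finset.sum_congr rfl fun u hu => Finset.sum_congr rfl fun v hv =>
              (e1 u hu v hv).symm
        _ ≤ (∑ u ∈ B, ∑ v ∈ B, W u v * (|h u - h v|)^2)
            * (∑ u ∈ B, ∑ v ∈ B, W u v * (h u + h v)^2) := hw
        _ = _ := by
            congr 1
            exact Finset.sum_congr rfl fun u hu => Finset.sum_congr rfl fun v hv =>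
              e2 u hu v hv
    have hS4 : ∑ u ∈ B, ∑ v ∈ B, W u v * (h u + h v)^2 ≤ 4 * Nh := by
      have e1 : ∀ u ∈ B, ∀ v ∈ B, W u v * (h u + h v)^2
          ≤ 2 * (W u v * h u^2) + 2 * (W u v * h v^2) := by
        intro u _ v _
        nlinarith [hW0 u v, sq_nonneg (h u - h v), mul_nonneg (hW0 u v) (sq_nonneg (h u - h v))]
      have e2 : ∑ u ∈ B, ∑ v ∈ B, (2 * (W u v * h u^2) + 2 * (W u v * h v^2))
          = 4 * Nh := by
        rw [hNh]
        have e3 : ∑ u ∈ B, ∑ v ∈ B, W u v * h u ^2 = ∑ v ∈ B, d v * h v ^ 2 :=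
          Finset.sum_congr rfl fun u _ => by rw [← Finset.sum_mul]
        have e4 : ∑ u ∈ B, ∑ v ∈ B, W u v * h v ^2 = ∑ v ∈ B, d v * h v ^ 2 := by
          rw [Finset.sum_comm]
          refine Finset.sum_congr rfl fun v hv => ?_
          rw [← Finset.sum_mul, hcol v hv]
        calc ∑ u ∈ B, ∑ v ∈ B, (2 * (W u v * h u^2) + 2 * (W u v * h v^2))
            = 2 * (∑ u ∈ B, ∑ v ∈ B, W u v * h u^2)
              + 2 * (∑ u ∈ B, ∑ v ∈ B, W u v * h v^2) := by
              rw [Finset.mul_sum, Finset.mul_sum, ← Finset.sum_add_distrib]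
              refine Finset.sum_congr rfl fun u _ => ?_
              rw [Finset.mul_sum, Finset.mul_sum, ← Finset.sum_add_distrib]
          _ = 4 * ∑ v ∈ B, d v * h v ^ 2 := by rw [e3, e4]; ring
      calc ∑ u ∈ B, ∑ v ∈ B, W u v * (h u + h v)^2
          ≤ ∑ u ∈ B, ∑ v ∈ B, (2 * (W u v * h u^2) + 2 * (W u v * h v^2)) :=
            Finset.sum_le_sum fun u hu => Finset.sum_le_sum fun v hv => e1 u hu v hv
        _ = 4 * Nh := e2
    have hPosb : Pos < (1/5) * Nh := by
      have habs0 : 0 ≤ ∑ u ∈ B, ∑ v ∈ B, W u v * |h u^2 - h v^2| :=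
        Finset.sum_nonneg fun u _ => Finset.sum_nonneg fun v _ =>
          mul_nonneg (hW0 u v) (abs_nonneg _)
      have hS40 : 0 ≤ ∑ u ∈ B, ∑ v ∈ B, W u v * (h u + h v)^2 :=
        Finset.sum_nonneg fun u _ => Finset.sum_nonneg fun v _ =>
          mul_nonneg (hW0 u v) (sq_nonneg _)
      have hdir2 : ∑ u ∈ B, ∑ v ∈ B, W u v * (h u - h v)^2 < (1/25) * Nh := hdirich
      have hsq : (∑ u ∈ B, ∑ v ∈ B, W u v * |h u^2 - h v^2|)^2 < ((2/5) * Nh)^2 := by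
        calc (∑ u ∈ B, ∑ v ∈ B, W u v * |h u^2 - h v^2|)^2
            ≤ (∑ u ∈ B, ∑ v ∈ B, W u v * (h u - h v)^2)
              * (∑ u ∈ B, ∑ v ∈ B, W u v * (h u + h v)^2) := hcs2
          _ < ((2/5) * Nh)^2 := by nlinarith
      have hlt : ∑ u ∈ B, ∑ v ∈ B, W u v * |h u^2 - h v^2| < (2/5) * Nh :=
        lt_of_pow_lt_pow_left₀ 2 (by positivity) hsq
      linarith [habs ▸ hlt]
    have hEx : ∃ s ∈ T, (∑ u ∈ B.filter (fun v => s ≤ h v^2),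
          ∑ v ∈ B \ B.filter (fun v => s ≤ h v^2), W u v)
        ≤ (1/5) * ∑ u ∈ B.filter (fun v => s ≤ h v^2), ∑ v ∈ B, W u v := by
      by_contra hcon
      push_neg at hcon
      have hlt : ∑ s ∈ T, gp s * ((1/5) * ∑ u ∈ B.filter (fun v => s ≤ h v^2), ∑ v ∈ B, W u v)
          < ∑ s ∈ T, gp s * (∑ u ∈ B.filter (fun v => s ≤ h v^2),
              ∑ v ∈ B \ B.filter (fun v => s ≤ h v^2), W u v) :=
        Finset.sum_lt_sum_of_nonempty hTne fun s hs =>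
          mul_lt_mul_of_pos_left (hcon s hs) (hgappos s hs)
      have e5 : ∑ s ∈ T, gp s * ((1/5) * ∑ u ∈ B.filter (fun v => s ≤ h v^2), ∑ v ∈ B, W u v)
          = (1/5) * ∑ s ∈ T, gp s * (∑ u ∈ B.filter (fun v => s ≤ h v^2), ∑ v ∈ B, W u v) := by
        rw [Finset.mul_sum]
        exact Finset.sum_congr rfl fun s _ => by ring
      rw [e5, I1, I2] at hlt
      linarith
    obtain ⟨s, hsT, hscut⟩ := hEx
    refine ⟨B.filter (fun v => s ≤ h v^2), Finset.filter_subset _ _, ?_, ?_, hscut⟩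
    · obtain ⟨v0, hv0, hv0e⟩ := Finset.mem_image.mp hsT
      exact ⟨v0, Finset.mem_filter.mpr ⟨(Finset.mem_filter.mp hv0).1, le_of_eq hv0e.symm⟩⟩
    · have hsub : B.filter (fun v => s ≤ h v^2) ⊆ B.filter (fun v => 0 < h v) := by
        intro v hv
        rw [Finset.mem_filter] at hv ⊢
        refine ⟨hv.1, ?_⟩
        have hpos : 0 < h v^2 := lt_of_lt_of_le (hTpos s hsT) hv.2
        rcases eq_or_lt_of_le (h0 v) with he | hlt
        · rw [← he] at hpos
          norm_num at hpos
        · exact hlt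
      exact le_trans (Finset.sum_le_sum_of_subset_of_nonneg hsub fun v _ _ => hμ0 v) hsupp
  -- now construct the test functions and pick a side
  have hmean' : ∑ v ∈ B, d v * f v = 0 := hmean
  have hSig : ∑ v ∈ B, ∑ u ∈ B, W v u * (f v - f u)^2 < (199/5000) * N1 := by
    have e := hdira f
    have eN : ∑ v ∈ B, d v * f v ^ 2 = N1 := rfl
    have eQ : ∑ v ∈ B, ∑ u ∈ B, W v u * (f v * f u) = Qff := rfl
    rw [eN, eQ] at e
    linarith [hQffbig]
  obtain ⟨cc, hmed1, hmed2⟩ := aux_median B μ f hμ0 hBne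
  set hp : V → ℝ := fun v => max (f v - cc) 0 with hhp
  set hm : V → ℝ := fun v => max (cc - f v) 0 with hhm
  have hp0 : ∀ v, 0 ≤ hp v := fun v => le_max_right _ _
  have hm0 : ∀ v, 0 ≤ hm v := fun v => le_max_right _ _
  have hptm : ∀ v, hp v ^2 + hm v ^2 = (f v - cc)^2 := by
    intro v
    have h1 := aux_ptsq (f v - cc)
    rw [neg_sub] at h1
    exact h1
  have hNsplit : N1 ≤ (∑ v ∈ B, d v * hp v^2) + (∑ v ∈ B, d v * hm v^2) := by
    have e2 : ∑ v ∈ B, d v * (f v - cc)^2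
        = N1 - 2*cc*(∑ v ∈ B, d v * f v) + cc^2 * ∑ v ∈ B, d v := by
      calc ∑ v ∈ B, d v * (f v - cc)^2
          = ∑ v ∈ B, (d v * f v^2 - 2*cc*(d v * f v) + cc^2 * d v) :=
            Finset.sum_congr rfl fun v _ => by ring
        _ = _ := by
            rw [Finset.sum_add_distrib, Finset.sum_sub_distrib, ← Finset.mul_sum,
              ← Finset.mul_sum]
    have hds : 0 ≤ ∑ v ∈ B, d v := Finset.sum_nonneg fun v _ => hd0 v
    have e1 : ∑ v ∈ B, d v * (f v - cc)^2
        = (∑ v ∈ B, d v * hp v^2) + (∑ v ∈ B, d v * hm v^2) := by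
      rw [← Finset.sum_add_distrib]
      refine Finset.sum_congr rfl fun v _ => ?_
      rw [← mul_add, hptm v]
    rw [hmean'] at e2
    nlinarith [mul_nonneg (sq_nonneg cc) hds]
  have hptd : ∀ a b : ℝ, (max (a-cc) 0 - max (b-cc) 0)^2
      + (max (cc-a) 0 - max (cc-b) 0)^2 ≤ (a-b)^2 := by
    intro a b
    have h1 := aux_ptdiff (a-cc) (b-cc)
    rw [neg_sub, neg_sub] at h1
    have e : (a-cc) - (b-cc) = a - b := by ring
    rw [e] at h1
    exact h1
  have hSsplit : (∑ v ∈ B, ∑ u ∈ B, W v u * (hp v - hp u)^2)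
      + (∑ v ∈ B, ∑ u ∈ B, W v u * (hm v - hm u)^2)
      ≤ ∑ v ∈ B, ∑ u ∈ B, W v u * (f v - f u)^2 := by
    rw [← Finset.sum_add_distrib]
    refine Finset.sum_le_sum fun v _ => ?_
    rw [← Finset.sum_add_distrib]
    refine Finset.sum_le_sum fun u _ => ?_
    simp only [hhp, hhm]
    have h1 := hptd (f v) (f u)
    have h2 := mul_le_mul_of_nonneg_left h1 (hW0 v u)
    nlinarith [h2]
  set Np : ℝ := ∑ v ∈ B, d v * hp v^2 with hNp
  set Nm : ℝ := ∑ v ∈ B, d v * hm v^2 with hNm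
  set S2p : ℝ := ∑ v ∈ B, ∑ u ∈ B, W v u * (hp v - hp u)^2 with hS2p
  set S2m : ℝ := ∑ v ∈ B, ∑ u ∈ B, W v u * (hm v - hm u)^2 with hS2m
  have hNpn : 0 ≤ Np := Finset.sum_nonneg fun v _ => mul_nonneg (hd0 v) (sq_nonneg _)
  have hNmn : 0 ≤ Nm := Finset.sum_nonneg fun v _ => mul_nonneg (hd0 v) (sq_nonneg _)
  have hmain : S2p + S2m < (1/25) * (Np + Nm) := by
    have h2 : (199/5000) * N1 ≤ (199/5000) * (Np + Nm) := by linarith [hNsplit]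
    have hNpm : 0 < Np + Nm := lt_of_lt_of_le hN1pos hNsplit
    linarith [hSig, hSsplit]
  have hsuppP : B.filter (fun v => 0 < hp v) = B.filter (fun v => cc < f v) := by
    refine Finset.filter_congr fun v _ => ?_
    simp only [hhp]
    rw [hmaxpos, sub_pos]
  have hsuppM : B.filter (fun v => 0 < hm v) = B.filter (fun v => f v < cc) := by
    refine Finset.filter_congr fun v _ => ?_
    simp only [hhm]
    rw [hmaxpos, sub_pos]
  by_cases hside : S2p < (1/25) * Np
  · exact SWEEP hp hp0 hside (by rw [hsuppP]; exact hmed1)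
  · have hm' : S2m < (1/25) * Nm := by
      have := not_lt.mp hside
      linarith [hmain]
    exact SWEEP hm hm0 hm' (by rw [hsuppM]; exact hmed2)
end sweep


/-- Every large induced subgraph of the two-step walk of a sampler contains a large
induced expander: if (G_samp, W) is an (α,δ)-sampler with α, δ < β²/100 and A ⊆ V2
has μ_G(A) ≥ β, there is B ⊆ A with μ_G(B) ≥ β/4 and λ(G_B) ≤ 99/100. -/
theorem stmt10 {V1 V2 : Type*} [Fintype V1] [Fintype V2] [DecidableEq V2]
    (P1 : V1 → ℝ) (hP1 : ∀ S, 0 ≤ P1 S) (hP1s : ∑ S, P1 S = 1)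
    (c : V1 → V2 → ℝ) (hc : ∀ S T, 0 ≤ c S T) (hcs : ∀ S, ∑ T, c S T = 1)
    (P2 : V2 → ℝ) (hP2 : ∀ T, P2 T = ∑ S, P1 S * c S T)
    -- edge weights of the two-step walk graph G
    (W : V2 → V2 → ℝ) (hWdef : ∀ T1 T2, W T1 T2 = ∑ S, P1 S * c S T1 * c S T2)
    (α β δ : ℝ) (hα : 0 < α) (hβ : 0 < β) (hδ : 0 < δ)
    (hα1 : α < 1) (hβ1 : β < 1) (hδ1 : δ < 1)
    (hαβ : α < β ^ 2 / 100) (hδβ : δ < β ^ 2 / 100)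
    (hsampler : ∀ f : V2 → ℝ, (∀ T, f T ∈ Set.Icc (0 : ℝ) 1) →
      ∑ S ∈ univ.filter (fun S =>
        α < |(∑ T, c S T * f T) - ∑ T, P2 T * f T|), P1 S ≤ δ)
    (A : Finset V2) (hA : β ≤ ∑ T ∈ A, P2 T) :
    ∃ B ⊆ A, β / 4 ≤ ∑ T ∈ B, P2 T ∧
      -- λ of the induced graph G_B is at most 99/100:
      ∀ f : V2 → ℝ, (∑ v ∈ B, (∑ u ∈ B, W v u) * f v = 0) →
        ∑ v ∈ B, (∑ u ∈ B, W v u) * ((∑ u ∈ B, W v u * f u) / (∑ u ∈ B, W v u)) ^ 2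
          ≤ (99 / 100 : ℝ) ^ 2 * ∑ v ∈ B, (∑ u ∈ B, W v u) * (f v) ^ 2 := by
  classical
  have hP2nn : ∀ T, 0 ≤ P2 T := fun T => by
    rw [hP2 T]
    exact Finset.sum_nonneg fun S _ => mul_nonneg (hP1 S) (hc S T)
  have hW0g : ∀ u v, 0 ≤ W u v := fun u v => by
    rw [hWdef u v]
    exact Finset.sum_nonneg fun S _ => mul_nonneg (mul_nonneg (hP1 S) (hc S u)) (hc S v)
  have hWsg : ∀ u v, W u v = W v u := fun u v => by
    rw [hWdef u v, hWdef v u]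
    exact Finset.sum_congr rfl fun S _ => by ring
  -- product formula for quadratic forms
  have hwf : ∀ (C D : Finset V2) (x y : V2 → ℝ),
      ∑ u ∈ C, ∑ v ∈ D, W u v * (x u * y v)
      = ∑ S, P1 S * ((∑ u ∈ C, c S u * x u) * (∑ v ∈ D, c S v * y v)) := by
    intro C D x y
    calc ∑ u ∈ C, ∑ v ∈ D, W u v * (x u * y v)
        = ∑ u ∈ C, ∑ v ∈ D, ∑ S, (P1 S * (c S u * x u)) * (c S v * y v) := by
          refine Finset.sum_congr rfl fun u _ => Finset.sum_congr rfl fun v _ => ?_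
          rw [hWdef, Finset.sum_mul]
          exact Finset.sum_congr rfl fun S _ => by ring
      _ = ∑ u ∈ C, ∑ S, (P1 S * (c S u * x u)) * ∑ v ∈ D, (c S v * y v) := by
          refine Finset.sum_congr rfl fun u _ => ?_
          rw [Finset.sum_comm]
          exact Finset.sum_congr rfl fun S _ => (Finset.mul_sum _ _ _).symm
      _ = ∑ S, P1 S * ((∑ u ∈ C, c S u * x u) * (∑ v ∈ D, c S v * y v)) := by
          rw [Finset.sum_comm]
          refine Finset.sum_congr rfl fun S _ => ?_
          rw [← Finset.sum_mul, ← Finset.mul_sum]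
          ring
  have hw2 : ∀ C D : Finset V2, ∑ u ∈ C, ∑ v ∈ D, W u v
      = ∑ S, P1 S * ((∑ u ∈ C, c S u) * (∑ v ∈ D, c S v)) := by
    intro C D
    have h := hwf C D (fun _ => 1) (fun _ => 1)
    simpa using h
  have hmuC : ∀ C : Finset V2, ∑ T ∈ C, P2 T = ∑ S, P1 S * ∑ T ∈ C, c S T := by
    intro C
    calc ∑ T ∈ C, P2 T = ∑ T ∈ C, ∑ S, P1 S * c S T :=
        Finset.sum_congr rfl fun T _ => hP2 T
      _ = ∑ S, ∑ T ∈ C, P1 S * c S T := Finset.sum_comm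
      _ = ∑ S, P1 S * ∑ T ∈ C, c S T :=
        Finset.sum_congr rfl fun S _ => (Finset.mul_sum _ _ _).symm
  have hcsnn : ∀ (S : V1) (C : Finset V2), 0 ≤ ∑ T ∈ C, c S T :=
    fun S C => Finset.sum_nonneg fun T _ => hc S T
  have hcs1 : ∀ (S : V1) (C : Finset V2), ∑ T ∈ C, c S T ≤ 1 := by
    intro S C
    rw [← hcs S]
    exact Finset.sum_le_sum_of_subset_of_nonneg (Finset.subset_univ C) fun T _ _ => hc S T
  have hmuuniv : ∑ T, P2 T = 1 := by
    rw [hmuC univ]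
    have e : ∑ S, P1 S * ∑ T ∈ univ, c S T = ∑ S, P1 S := by
      refine Finset.sum_congr rfl fun S _ => ?_
      rw [hcs S, mul_one]
    rw [e, hP1s]
  have hmuA1 : ∑ T ∈ A, P2 T ≤ 1 := by
    rw [← hmuuniv]
    exact Finset.sum_le_sum_of_subset_of_nonneg (Finset.subset_univ A) fun T _ _ => hP2nn T
  -- sampler applied to indicators
  have hbad : ∀ C : Finset V2,
      ∑ S ∈ univ.filter (fun S => α < |(∑ T ∈ C, c S T) - ∑ T ∈ C, P2 T|), P1 S ≤ δ := by
    intro C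
    have h := hsampler (fun T => if T ∈ C then 1 else 0)
      (fun T => by by_cases hT : T ∈ C <;> simp [hT])
    have e1 : ∀ S : V1, ∑ T, c S T * (if T ∈ C then (1:ℝ) else 0) = ∑ T ∈ C, c S T := by
      intro S
      simp [mul_ite, mul_one, mul_zero, Finset.sum_ite_mem]
    have e2 : ∑ T, P2 T * (if T ∈ C then (1:ℝ) else 0) = ∑ T ∈ C, P2 T := by
      simp [mul_ite, mul_one, mul_zero, Finset.sum_ite_mem]
    have e3 : univ.filter (fun S =>
          α < |(∑ T, c S T * (if T ∈ C then (1:ℝ) else 0))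
            - ∑ T, P2 T * (if T ∈ C then (1:ℝ) else 0)|)
        = univ.filter (fun S => α < |(∑ T ∈ C, c S T) - ∑ T ∈ C, P2 T|) :=
      Finset.filter_congr fun S _ => by rw [e1 S, e2]
    rw [e3] at h
    exact h
  -- lower bound on cut weight between two heavy sets
  have hcutlow : ∀ C D : Finset V2, α ≤ ∑ T ∈ C, P2 T → α ≤ ∑ T ∈ D, P2 T →
      (1 - 2*δ) * ((∑ T ∈ C, P2 T - α) * (∑ T ∈ D, P2 T - α))
        ≤ ∑ u ∈ C, ∑ v ∈ D, W u v := by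
    intro C D hC hD
    set BadC := univ.filter (fun S => α < |(∑ T ∈ C, c S T) - ∑ T ∈ C, P2 T|) with hBadC
    set BadD := univ.filter (fun S => α < |(∑ T ∈ D, c S T) - ∑ T ∈ D, P2 T|) with hBadD
    set Bad := BadC ∪ BadD with hBad
    have hBadm : ∑ S ∈ Bad, P1 S ≤ 2*δ := by
      have h1 : ∑ S ∈ BadC ∪ BadD, P1 S + ∑ S ∈ BadC ∩ BadD, P1 S
          = ∑ S ∈ BadC, P1 S + ∑ S ∈ BadD, P1 S := Finset.sum_union_inter
      have h2 : 0 ≤ ∑ S ∈ BadC ∩ BadD, P1 S := Finset.sum_nonneg fun S _ => hP1 S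
      have h3 := hbad C
      have h4 := hbad D
      rw [← hBadC] at h3
      rw [← hBadD] at h4
      linarith
    have hGoodm : 1 - 2*δ ≤ ∑ S ∈ univ \ Bad, P1 S := by
      have h1 : ∑ S ∈ univ \ Bad, P1 S + ∑ S ∈ Bad, P1 S = ∑ S, P1 S :=
        Finset.sum_sdiff (Finset.subset_univ Bad)
      rw [hP1s] at h1
      linarith
    have hGood : ∀ S ∈ univ \ Bad,
        (∑ T ∈ C, P2 T - α) ≤ ∑ T ∈ C, c S T ∧ (∑ T ∈ D, P2 T - α) ≤ ∑ T ∈ D, c S T := by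
      intro S hS
      rw [Finset.mem_sdiff, hBad, Finset.mem_union] at hS
      push_neg at hS
      obtain ⟨-, h1, h2⟩ := hS
      rw [hBadC, Finset.mem_filter] at h1
      rw [hBadD, Finset.mem_filter] at h2
      push_neg at h1 h2
      constructor
      · have := abs_le.mp (h1 (Finset.mem_univ S))
        linarith [this.1]
      · have := abs_le.mp (h2 (Finset.mem_univ S))
        linarith [this.1]
    rw [hw2 C D]
    have hsub : ∑ S ∈ univ \ Bad, P1 S * ((∑ T ∈ C, c S T) * (∑ T ∈ D, c S T))
        ≤ ∑ S, P1 S * ((∑ T ∈ C, c S T) * (∑ T ∈ D, c S T)) :=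
      Finset.sum_le_sum_of_subset_of_nonneg (Finset.subset_univ _)
        fun S _ _ => mul_nonneg (hP1 S) (mul_nonneg (hcsnn S C) (hcsnn S D))
    have hterm : ∀ S ∈ univ \ Bad,
        P1 S * ((∑ T ∈ C, P2 T - α) * (∑ T ∈ D, P2 T - α))
        ≤ P1 S * ((∑ T ∈ C, c S T) * (∑ T ∈ D, c S T)) := by
      intro S hS
      obtain ⟨g1, g2⟩ := hGood S hS
      refine mul_le_mul_of_nonneg_left ?_ (hP1 S)
      exact mul_le_mul g1 g2 (by linarith) (hcsnn S C)
    have hsum2 : (1 - 2*δ) * ((∑ T ∈ C, P2 T - α) * (∑ T ∈ D, P2 T - α))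
        ≤ ∑ S ∈ univ \ Bad, P1 S * ((∑ T ∈ C, P2 T - α) * (∑ T ∈ D, P2 T - α)) := by
      rw [← Finset.sum_mul]
      exact mul_le_mul_of_nonneg_right hGoodm
        (mul_nonneg (by linarith) (by linarith))
    calc (1 - 2*δ) * ((∑ T ∈ C, P2 T - α) * (∑ T ∈ D, P2 T - α))
        ≤ ∑ S ∈ univ \ Bad, P1 S * ((∑ T ∈ C, P2 T - α) * (∑ T ∈ D, P2 T - α)) := hsum2
      _ ≤ ∑ S ∈ univ \ Bad, P1 S * ((∑ T ∈ C, c S T) * (∑ T ∈ D, c S T)) :=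
        Finset.sum_le_sum hterm
      _ ≤ _ := hsub
  -- upper bound for volume within A
  have hcutup : ∀ C : Finset V2, ∑ u ∈ C, ∑ v ∈ A, W u v
      ≤ (∑ T ∈ A, P2 T + α) * (∑ T ∈ C, P2 T) + δ := by
    intro C
    rw [hw2 C A]
    set BadA := univ.filter (fun S => α < |(∑ T ∈ A, c S T) - ∑ T ∈ A, P2 T|) with hBadA
    have hsplit : ∑ S, P1 S * ((∑ T ∈ C, c S T) * (∑ T ∈ A, c S T))
        = ∑ S ∈ univ \ BadA, P1 S * ((∑ T ∈ C, c S T) * (∑ T ∈ A, c S T))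
          + ∑ S ∈ BadA, P1 S * ((∑ T ∈ C, c S T) * (∑ T ∈ A, c S T)) :=
      (Finset.sum_sdiff (Finset.subset_univ BadA)).symm
    have hb1 : ∑ S ∈ BadA, P1 S * ((∑ T ∈ C, c S T) * (∑ T ∈ A, c S T)) ≤ δ := by
      have h1 : ∀ S ∈ BadA, P1 S * ((∑ T ∈ C, c S T) * (∑ T ∈ A, c S T)) ≤ P1 S := by
        intro S _
        have := mul_le_one₀ (hcs1 S C) (hcsnn S A) (hcs1 S A)
        nlinarith [hP1 S, hcsnn S C, hcsnn S A]
      calc ∑ S ∈ BadA, P1 S * ((∑ T ∈ C, c S T) * (∑ T ∈ A, c S T))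
          ≤ ∑ S ∈ BadA, P1 S := Finset.sum_le_sum h1
        _ ≤ δ := by rw [hBadA]; exact hbad A
    have hg1 : ∑ S ∈ univ \ BadA, P1 S * ((∑ T ∈ C, c S T) * (∑ T ∈ A, c S T))
        ≤ (∑ T ∈ A, P2 T + α) * (∑ T ∈ C, P2 T) := by
      have h1 : ∀ S ∈ univ \ BadA, P1 S * ((∑ T ∈ C, c S T) * (∑ T ∈ A, c S T))
          ≤ (∑ T ∈ A, P2 T + α) * (P1 S * (∑ T ∈ C, c S T)) := by
        intro S hS
        rw [Finset.mem_sdiff, hBadA, Finset.mem_filter] at hS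
        obtain ⟨-, h2⟩ := hS
        push_neg at h2
        have h3 := abs_le.mp (h2 (Finset.mem_univ S))
        have h4 : ∑ T ∈ A, c S T ≤ ∑ T ∈ A, P2 T + α := by linarith [h3.2]
        have h5 : 0 ≤ P1 S * (∑ T ∈ C, c S T) := mul_nonneg (hP1 S) (hcsnn S C)
        nlinarith [hP1 S, hcsnn S C, hcsnn S A]
      calc ∑ S ∈ univ \ BadA, P1 S * ((∑ T ∈ C, c S T) * (∑ T ∈ A, c S T))
          ≤ ∑ S ∈ univ \ BadA, (∑ T ∈ A, P2 T + α) * (P1 S * (∑ T ∈ C, c S T)) :=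
            Finset.sum_le_sum h1
        _ ≤ ∑ S, (∑ T ∈ A, P2 T + α) * (P1 S * (∑ T ∈ C, c S T)) :=
            Finset.sum_le_sum_of_subset_of_nonneg (Finset.subset_univ _) fun S _ _ =>
              mul_nonneg (by linarith [hmuA1, hα]) (mul_nonneg (hP1 S) (hcsnn S C))
        _ = (∑ T ∈ A, P2 T + α) * (∑ T ∈ C, P2 T) := by
            rw [← Finset.mul_sum, hmuC C]
    linarith [hsplit, hb1, hg1]
  -- quadratic form facts
  have hQ0B : ∀ (B : Finset V2) (x : V2 → ℝ),
      0 ≤ ∑ v ∈ B, ∑ u ∈ B, W v u * (x v * x u) := by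
    intro B x
    rw [hwf B B x x]
    exact Finset.sum_nonneg fun S _ => mul_nonneg (hP1 S) (mul_self_nonneg _)
  have hCSB : ∀ (B : Finset V2) (x y : V2 → ℝ),
      (∑ v ∈ B, ∑ u ∈ B, W v u * (x v * y u))^2 ≤
        (∑ v ∈ B, ∑ u ∈ B, W v u * (x v * x u))
          * (∑ v ∈ B, ∑ u ∈ B, W v u * (y v * y u)) := by
    intro B x y
    rw [hwf B B x y, hwf B B x x, hwf B B y y]
    have h := aux_wcs2 univ P1 (fun S => ∑ u ∈ B, c S u * x u)
      (fun S => ∑ v ∈ B, c S v * y v) (fun S _ => hP1 S)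
    simp only [pow_two] at h ⊢
    exact h
  have hQcB : ∀ (B : Finset V2) (x : V2 → ℝ),
      (∑ v ∈ B, ∑ u ∈ B, W v u * (x v * x u))
        ≤ ∑ v ∈ B, (∑ u ∈ B, W v u) * x v ^ 2 := by
    intro B x
    rw [hwf B B x x]
    have step1 : ∀ S : V1, P1 S * ((∑ u ∈ B, c S u * x u) * (∑ u ∈ B, c S u * x u))
        ≤ P1 S * ((∑ u ∈ B, c S u) * (∑ u ∈ B, c S u * x u ^ 2)) := by
      intro S
      refine mul_le_mul_of_nonneg_left ?_ (hP1 S)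
      have h := aux_wcs B (fun u => c S u) x (fun u _ => hc S u)
      calc (∑ u ∈ B, c S u * x u) * (∑ u ∈ B, c S u * x u)
          = (∑ u ∈ B, c S u * x u)^2 := (pow_two _).symm
        _ ≤ _ := h
    have step2 : ∑ S, P1 S * ((∑ u ∈ B, c S u) * (∑ u ∈ B, c S u * x u ^ 2))
        = ∑ v ∈ B, (∑ u ∈ B, W v u) * x v ^ 2 := by
      have h1 := hwf B B (fun v => x v ^ 2) (fun _ => (1:ℝ))
      simp only [mul_one] at h1
      have h2 : ∑ u ∈ B, ∑ v ∈ B, W u v * x u ^ 2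
          = ∑ v ∈ B, (∑ u ∈ B, W v u) * x v ^ 2 :=
        Finset.sum_congr rfl fun u _ => by rw [← Finset.sum_mul]
      rw [← h2, h1]
      exact Finset.sum_congr rfl fun S _ => by ring
    exact le_trans (Finset.sum_le_sum fun S _ => step1 S) (le_of_eq step2)
  set m : ℝ := ∑ T ∈ A, P2 T with hmdef
  have hm0 : 0 < m := lt_of_lt_of_le hβ hA
  -- the main recursion
  have hrec : ∀ n : ℕ, ∀ B : Finset V2, B.card ≤ n → B ⊆ A →
      ((∑ u ∈ A \ B, ∑ v ∈ B, W u v) ≤ (1/5) * ∑ u ∈ A \ B, ∑ v ∈ A, W u v) →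
      (m - β/10 < ∑ T ∈ B, P2 T) →
      (∃ B' ⊆ A, β / 4 ≤ ∑ T ∈ B', P2 T ∧
        ∀ f : V2 → ℝ, (∑ v ∈ B', (∑ u ∈ B', W v u) * f v = 0) →
          ∑ v ∈ B', (∑ u ∈ B', W v u) * ((∑ u ∈ B', W v u * f u) / (∑ u ∈ B', W v u)) ^ 2
            ≤ (99 / 100 : ℝ) ^ 2 * ∑ v ∈ B', (∑ u ∈ B', W v u) * (f v) ^ 2) := by
    intro n
    induction n with
    | zero =>
      intro B hcard hBA hcut hmass
      exfalso
      have hB : B = ∅ := Finset.card_eq_zero.mp (Nat.le_zero.mp hcard)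
      rw [hB, Finset.sum_empty] at hmass
      linarith
    | succ n ih =>
      intro B hcard hBA hcut hmass
      by_cases hgood : ∀ f : V2 → ℝ, (∑ v ∈ B, (∑ u ∈ B, W v u) * f v = 0) →
          ∑ v ∈ B, (∑ u ∈ B, W v u) * ((∑ u ∈ B, W v u * f u) / (∑ u ∈ B, W v u)) ^ 2
            ≤ (99 / 100 : ℝ) ^ 2 * ∑ v ∈ B, (∑ u ∈ B, W v u) * (f v) ^ 2
      · exact ⟨B, hBA, by linarith, hgood⟩
      · push_neg at hgood
        obtain ⟨f, hf0, hflt⟩ := hgood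
        obtain ⟨C, hCB, hCne, hCmass, hCcut⟩ :=
          aux_sweep B W P2 hW0g hWsg hP2nn (hQ0B B) (hCSB B) (hQcB B) f hf0
            (not_le.mpr hflt)
        have hB'A : B \ C ⊆ A := Finset.Subset.trans (Finset.sdiff_subset) hBA
        have hcard' : (B \ C).card ≤ n := by
          have h1 : B \ C ⊂ B := Finset.sdiff_ssubset hCB hCne
          have h2 := Finset.card_lt_card h1
          omega
        have hAB' : A \ (B \ C) = (A \ B) ∪ C := by
          ext a
          simp only [Finset.mem_sdiff, Finset.mem_union, not_and, not_not]
          constructor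
          · rintro ⟨haA, h⟩
            by_cases haB : a ∈ B
            · exact Or.inr (h haB)
            · exact Or.inl ⟨haA, haB⟩
          · rintro (⟨haA, haB⟩ | haC)
            · exact ⟨haA, fun hc' => absurd hc' haB⟩
            · exact ⟨hBA (hCB haC), fun _ => haC⟩
        have hdisj : Disjoint (A \ B) C := by
          rw [Finset.disjoint_left]
          intro a ha haC
          exact (Finset.mem_sdiff.mp ha).2 (hCB haC)
        have hcut' : (∑ u ∈ A \ (B \ C), ∑ v ∈ B \ C, W u v)
            ≤ (1/5) * ∑ u ∈ A \ (B \ C), ∑ v ∈ A, W u v := by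
          rw [hAB', Finset.sum_union hdisj, Finset.sum_union hdisj]
          have t1 : ∑ u ∈ A \ B, ∑ v ∈ B \ C, W u v ≤ ∑ u ∈ A \ B, ∑ v ∈ B, W u v :=
            Finset.sum_le_sum fun u _ =>
              Finset.sum_le_sum_of_subset_of_nonneg (Finset.sdiff_subset)
                fun v _ _ => hW0g u v
          have t3 : ∑ u ∈ C, ∑ v ∈ B, W u v ≤ ∑ u ∈ C, ∑ v ∈ A, W u v :=
            Finset.sum_le_sum fun u _ =>
              Finset.sum_le_sum_of_subset_of_nonneg hBA fun v _ _ => hW0g u v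
          linarith [hcut, hCcut, t1, t3]
        by_cases hmass' : m - β/10 < ∑ T ∈ B \ C, P2 T
        · exact ih (B \ C) hcard' hB'A hcut' hmass'
        · exfalso
          have hbB : ∑ T ∈ B \ C, P2 T = ∑ T ∈ B, P2 T - ∑ T ∈ C, P2 T :=
            Finset.sum_sdiff_eq_sub hCB
          have hmadd : ∑ T ∈ A \ (B \ C), P2 T = m - ∑ T ∈ B \ C, P2 T := by
            rw [Finset.sum_sdiff_eq_sub hB'A, hmdef]
          have hb : (m - β/10)/2 < ∑ T ∈ B \ C, P2 T := by
            rw [hbB]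
            linarith [hCmass, hmass]
          have hr : β/10 ≤ ∑ T ∈ A \ (B \ C), P2 T := by
            rw [hmadd]
            linarith [not_lt.mp hmass']
          -- numeric contradiction
          have hβm : β ≤ m := hA
          have hm1 : m ≤ 1 := hmuA1
          have hrnn : (0:ℝ) < ∑ T ∈ A \ (B \ C), P2 T := by
            have : (0:ℝ) < β/10 := by linarith
            linarith
          have hαr : α ≤ ∑ T ∈ A \ (B \ C), P2 T := by
            nlinarith [mul_nonneg (by linarith : (0:ℝ) ≤ 1 - β) hβ.le]
          have hαb : α ≤ ∑ T ∈ B \ C, P2 T := by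
            nlinarith [mul_nonneg (by linarith : (0:ℝ) ≤ 1 - β) hβ.le]
          have hlow := hcutlow (A \ (B \ C)) (B \ C) hαr hαb
          have hup := hcutup (A \ (B \ C))
          have hmr : 0 < m * ∑ T ∈ A \ (B \ C), P2 T := mul_pos hm0 hrnn
          have k1 : (98:ℝ)/100 ≤ 1 - 2*δ := by nlinarith [mul_nonneg (by linarith : (0:ℝ) ≤ 1 - β) hβ.le]
          have k2 : (9:ℝ)/10 * (∑ T ∈ A \ (B \ C), P2 T) ≤ ∑ T ∈ A \ (B \ C), P2 T - α := by
            nlinarith [mul_nonneg (by linarith : (0:ℝ) ≤ 1 - β) hβ.le]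
          have k3 : (44:ℝ)/100 * m ≤ ∑ T ∈ B \ C, P2 T - α := by
            nlinarith [mul_nonneg (sub_nonneg.mpr hβm) hβ.le,
              mul_nonneg (by linarith : (0:ℝ) ≤ 1 - β) (by linarith : (0:ℝ) ≤ m)]
          have i1 : ((9:ℝ)/10 * (∑ T ∈ A \ (B \ C), P2 T)) * ((44:ℝ)/100 * m)
              ≤ (∑ T ∈ A \ (B \ C), P2 T - α) * (∑ T ∈ B \ C, P2 T - α) :=
            mul_le_mul k2 k3 (by nlinarith) (by linarith)
          have i2 : ((98:ℝ)/100) * (((9:ℝ)/10 * (∑ T ∈ A \ (B \ C), P2 T)) * ((44:ℝ)/100 * m))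
              ≤ (1 - 2*δ) * ((∑ T ∈ A \ (B \ C), P2 T - α) * (∑ T ∈ B \ C, P2 T - α)) :=
            mul_le_mul k1 i1 (by nlinarith) (by linarith)
          have k5 : δ ≤ (1/10) * (m * ∑ T ∈ A \ (B \ C), P2 T) := by
            nlinarith [mul_le_mul hβm hr (by linarith) (by linarith : (0:ℝ) ≤ m)]
          have k6 : α * (∑ T ∈ A \ (B \ C), P2 T) ≤ (1/100) * (m * ∑ T ∈ A \ (B \ C), P2 T) := by
            have hαm : α ≤ m/100 := by
              nlinarith [mul_nonneg (sub_nonneg.mpr hβm) hβ.le,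
                mul_nonneg (by linarith : (0:ℝ) ≤ 1 - β) (by linarith : (0:ℝ) ≤ m)]
            nlinarith [hrnn.le]
          linarith [i2, hlow, hcut', hup, k5, k6, hmr]
  refine hrec A.card A le_rfl (Finset.Subset.refl A) ?_ ?_
  · rw [Finset.sdiff_self]
    simp
  · linarith
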